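/- Consider the Markov chain on ℕ with transition probabilities π_{n,1} = 1/n = 1 - π_{n,n-1} for n ≥ 3 and π_{2,1} = 1, and let X_n be the absorption time at state 1 starting from n. Then ℙ{X_n = n-1} = 2/n and ℙ{X_n = k} = 1/n for each k ∈ {1, …, n-2}; consequently X_n/n converges in distribution to the uniform distribution on (0,1). -/

import Mathlib

open Filter

section aux

variable (f : ℕ → ℕ → ℝ)
    (hf2 : ∀ k, f 2 k = if k = 1 then 1 else 0)
    (hfrec : ∀ n, 3 ≤ n → ∀ k, f n k
      = (1 / n) * (if k = 1 then 1 else 0)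
        + (1 - 1 / n) * (if 1 ≤ k then f (n - 1) (k - 1) else 0))

include hf2 hfrec in
lemma fzero : ∀ n, 2 ≤ n → f n 0 = 0 := by
  intro n hn
  rcases eq_or_lt_of_le hn with h | h
  · rw [← h, hf2]; simp
  · rw [hfrec n h 0]; simp

include hf2 hfrec in
lemma dist : ∀ n, 2 ≤ n →
    f n (n - 1) = 2 / n ∧ ∀ k ∈ Finset.Icc 1 (n - 2), f n k = 1 / n := by
  intro n hn
  induction n, hn using Nat.le_induction with
  | base =>
    constructor
    · rw [hf2]; norm_num
    · intro k hk; simp at hk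
  | succ n hn ih =>
    have h3 : 3 ≤ n + 1 := by omega
    have hn0 : (0:ℝ) < n := by positivity
    have hn1 : (0:ℝ) < (n:ℝ) + 1 := by positivity
    have hkey : (1 - 1 / ((n:ℝ) + 1)) = n / (n + 1) := by field_simp; ring
    constructor
    · have : (n + 1 : ℕ) - 1 = n := by omega
      rw [this, hfrec (n+1) h3 n]
      have hne : n ≠ 1 := by omega
      have h1 : (n + 1 : ℕ) - 1 = n := by omega
      have hnm1 : f n (n - 1) = 2 / n := ih.1
      simp only [hne, if_false, h1, push_cast]
      rw [if_pos (by omega : 1 ≤ n), hnm1]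
      push_cast
      rw [hkey]
      field_simp
      ring
    · intro k hk
      simp only [Finset.mem_Icc] at hk
      obtain ⟨hk1, hk2⟩ := hk
      have hk2' : k ≤ n - 1 := by omega
      rw [hfrec (n+1) h3 k]
      have h1 : (n + 1 : ℕ) - 1 = n := by omega
      rw [h1, if_pos hk1]
      rcases eq_or_lt_of_le hk1 with h | h
      · rw [← h]
        simp only [if_pos rfl]
        rw [show (1:ℕ) - 1 = 0 from rfl, fzero f hf2 hfrec n hn]
        push_cast
        ring
      · have hne : k ≠ 1 := by omega
        rw [if_neg hne]
        have : f n (k - 1) = 1 / n := ih.2 (k-1) (by simp [Finset.mem_Icc]; omega)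
        rw [this]
        push_cast
        rw [hkey]
        field_simp
        ring

end aux

theorem death_chain_uniform_limit (f : ℕ → ℕ → ℝ)
    (hf2 : ∀ k, f 2 k = if k = 1 then 1 else 0)
    (hfrec : ∀ n, 3 ≤ n → ∀ k, f n k
      = (1 / n) * (if k = 1 then 1 else 0)
        + (1 - 1 / n) * (if 1 ≤ k then f (n - 1) (k - 1) else 0)) :
    (∀ n : ℕ, 2 ≤ n →
      f n (n - 1) = 2 / n ∧ ∀ k ∈ Finset.Icc 1 (n - 2), f n k = 1 / n) ∧
    (∀ t ∈ Set.Ioo (0:ℝ) 1,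
      Tendsto (fun n : ℕ => ∑ k ∈ Finset.range (⌊t * n⌋₊ + 1), f n k)
        atTop (nhds t)) := by
  refine ⟨dist f hf2 hfrec, ?_⟩
  intro t ht
  obtain ⟨ht0, ht1⟩ := ht
  -- eventually, the sum equals ⌊t n⌋ / n
  have hev : ∀ᶠ n : ℕ in atTop,
      (∑ k ∈ Finset.range (⌊t * n⌋₊ + 1), f n k) = (⌊t * n⌋₊ : ℝ) / n := by
    have h1t : (0:ℝ) < 1 - t := by linarith
    filter_upwards [eventually_gt_atTop ⌈(1:ℝ)/(1-t)⌉₊] with n hn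
    have hnR : (1:ℝ)/(1-t) < n := by
      calc (1:ℝ)/(1-t) ≤ ⌈(1:ℝ)/(1-t)⌉₊ := Nat.le_ceil _
        _ < n := by exact_mod_cast hn
    have hn1 : (1:ℝ) < (1-t) * n := by
      rw [div_lt_iff₀ h1t] at hnR; linarith
    have hn2 : 2 ≤ n := by
      by_contra h
      interval_cases n <;> simp_all <;> nlinarith
    have hfloor : ⌊t * n⌋₊ ≤ n - 2 := by
      have hle : (⌊t * n⌋₊ : ℝ) ≤ t * n := Nat.floor_le (by positivity)
      have h2 : (⌊t * n⌋₊ : ℝ) < (n:ℝ) - 1 := by nlinarith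
      have hc : ((n - 1 : ℕ) : ℝ) = (n:ℝ) - 1 := by
        rw [Nat.cast_sub (by omega : 1 ≤ n)]; norm_num
      have : ⌊t * n⌋₊ < n - 1 := by exact_mod_cast hc ▸ h2
      omega
    set m := ⌊t * n⌋₊ with hm
    rw [Finset.sum_range_succ']
    rw [fzero f hf2 hfrec n hn2, add_zero]
    have : ∀ i ∈ Finset.range m, f n (i + 1) = 1 / n := by
      intro i hi
      simp only [Finset.mem_range] at hi
      exact (dist f hf2 hfrec n hn2).2 (i + 1)
        (by simp only [Finset.mem_Icc]; omega)
    rw [Finset.sum_congr rfl this, Finset.sum_const, Finset.card_range,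
      nsmul_eq_mul]
    ring
  -- tendsto of floor / n
  have htend : Tendsto (fun n : ℕ => (⌊t * n⌋₊ : ℝ) / n) atTop (nhds t) := by
    have hlow : Tendsto (fun n : ℕ => t - 1 / (n:ℝ)) atTop (nhds t) := by
      have h := Tendsto.sub (tendsto_const_nhds : Tendsto (fun _ : ℕ => t) atTop (nhds t)) tendsto_one_div_atTop_nhds_zero_nat
      simpa using h
    refine tendsto_of_tendsto_of_tendsto_of_le_of_le' hlow tendsto_const_nhds
      ?_ ?_
    · filter_upwards [eventually_ge_atTop 1] with n hn
      have hn0 : (0:ℝ) < n := by exact_mod_cast hn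
      have h2 : t * n - 1 < (⌊t * n⌋₊ : ℝ) := Nat.sub_one_lt_floor _
      have h1 : (1:ℝ)/n * n = 1 := by field_simp
      rw [le_div_iff₀ hn0]
      nlinarith
    · filter_upwards [eventually_ge_atTop 1] with n hn
      have hn0 : (0:ℝ) < n := by exact_mod_cast hn
      have : (⌊t * n⌋₊ : ℝ) ≤ t * n := Nat.floor_le (by positivity)
      rw [div_le_iff₀ hn0]
      linarith
  exact Tendsto.congr' (Filter.EventuallyEq.symm hev) htend
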